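/- Let S = {x_1, ..., x_k} be a finite set of positive integers and let G be the graph constructed from S as follows: for each x_i, G contains a connected component consisting of two disjoint cliques C¹_i and C²_i, each of size 2x_i, together with a fixed bijection (counterpart map) between them, where each vertex of C¹_i is additionally adjacent to every vertex of C²_i except its counterpart; G is the disjoint union of these k components. Then S can be partitioned into two disjoint subsets with equal sums if and only if G has a strong community bisection. -/

import Mathlib

open Classical

/-- A strong community bisection of a graph `H` on a finite vertex set: the part `A`
and its complement have equal size, and every vertex has strictly more neighbors
in its own part than in the other part. -/
def IsStrongCommunityBisection {W : Type*} [Fintype W] (H : SimpleGraph W) (A : Finset W) :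
    Prop :=
  2 * A.card = Fintype.card W ∧
  ∀ v : W,
    ((H.neighborFinset v).filter fun u => (u ∈ A ↔ v ∈ A)).card >
    ((H.neighborFinset v).filter fun u => ¬(u ∈ A ↔ v ∈ A)).card

/-- The graph constructed from a set `S` of positive integers: for each `x ∈ S`
there is one connected component whose vertices are `Fin 2 × Fin (2 * x)`
(two cliques `C¹ = {0} × Fin (2x)` and `C² = {1} × Fin (2x)`, with counterpart map
`(0, j) ↔ (1, j)`).  Within a component, two vertices are adjacent iff their
`Fin (2x)`-indices differ: this makes each `Cᶜ` a clique of size `2x` and joins every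
vertex of `C¹` to every vertex of `C²` except its counterpart.  Distinct components
are not joined. -/
def sppGraph (S : Finset ℕ) :
    SimpleGraph (Σ x : {x // x ∈ S}, Fin 2 × Fin (2 * x.val)) where
  Adj a b := a.1 = b.1 ∧ (a.2.2 : ℕ) ≠ (b.2.2 : ℕ)
  symm := by
    constructor
    rintro a b ⟨h1, h2⟩
    exact ⟨h1.symm, h2.symm⟩
  loopless := by
    constructor
    rintro a ⟨-, h⟩
    exact h rfl

namespace SCBaux

variable {S : Finset ℕ}

abbrev V (S : Finset ℕ) := Σ x : {x // x ∈ S}, Fin 2 × Fin (2 * x.val)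

noncomputable def comp (c : {x // x ∈ S}) : Finset (V S) :=
  Finset.univ.filter (fun v => v.1 = c)

noncomputable def pair (c : {x // x ∈ S}) (j : Fin (2 * c.val)) : Finset (V S) :=
  {⟨c, (0, j)⟩, ⟨c, (1, j)⟩}

lemma mem_comp {c : {x // x ∈ S}} {v : V S} : v ∈ comp c ↔ v.1 = c := by
  simp [comp]

lemma comp_eq_map (c : {x // x ∈ S}) :
    comp c = Finset.univ.map ⟨Sigma.mk c, sigma_mk_injective⟩ := by
  ext v
  cases v with
  | mk a p =>
    simp only [mem_comp, Finset.mem_map, Finset.mem_univ, true_and,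
      Function.Embedding.coeFn_mk]
    constructor
    · rintro rfl; exact ⟨p, rfl⟩
    · rintro ⟨q, h⟩
      exact (Sigma.mk.inj_iff.mp h).1.symm

lemma comp_card (c : {x // x ∈ S}) : (comp c).card = 2 * (2 * c.val) := by
  rw [comp_eq_map, Finset.card_map, Finset.card_univ]
  simp

lemma pair_card (c : {x // x ∈ S}) (j : Fin (2 * c.val)) : (pair c j).card = 2 := by
  rw [pair, Finset.card_insert_of_notMem, Finset.card_singleton]
  simp [Sigma.mk.inj_iff]

lemma pair_subset (c : {x // x ∈ S}) (j : Fin (2 * c.val)) : pair c j ⊆ comp c := by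
  intro v hv
  rw [pair, Finset.mem_insert, Finset.mem_singleton] at hv
  rcases hv with rfl | rfl <;> simp [mem_comp]

lemma mem_pair_self (v : V S) : v ∈ pair v.1 v.2.2 := by
  obtain ⟨c, i, j⟩ := v
  fin_cases i <;> simp [pair]

lemma neighborFinset_eq (v : V S) :
    (sppGraph S).neighborFinset v = comp v.1 \ pair v.1 v.2.2 := by
  ext u
  obtain ⟨c, i, j⟩ := v
  obtain ⟨d, i', j'⟩ := u
  rw [SimpleGraph.mem_neighborFinset]
  simp only [SimpleGraph.mem_neighborFinset, sppGraph, Finset.mem_sdiff, mem_comp, pair,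
    Finset.mem_insert, Finset.mem_singleton]
  constructor
  · rintro ⟨rfl, h⟩
    refine ⟨rfl, ?_⟩
    rintro (h' | h') <;>
    · rw [Sigma.mk.inj_iff] at h'
      have := heq_eq_eq _ _ ▸ h'.2
      simp only [Prod.mk.injEq] at this
      exact h (by rw [this.2])
  · rintro ⟨rfl, h⟩
    refine ⟨rfl, fun hj => h ?_⟩
    have hj' : j' = j := Fin.ext hj.symm
    subst hj'
    fin_cases i' <;> fin_cases i <;> simp_all

/-- Key lemma: A strong community bisection is constant on components. -/
lemma comp_const {A : Finset (V S)} (hA : IsStrongCommunityBisection (sppGraph S) A)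
    {v w : V S} (hvw : v.1 = w.1) (hv : v ∈ A) : w ∈ A := by
  by_contra hw
  obtain ⟨c, pv⟩ := v
  obtain ⟨d, pw⟩ := w
  cases hvw
  set X := (comp c).filter (· ∈ A) with hX
  set Y := (comp c).filter (· ∉ A) with hY
  set P := pair c pv.2 with hP
  set Q := pair c pw.2 with hQ
  have hPC : P ⊆ comp c := pair_subset _ _
  have hQC : Q ⊆ comp c := pair_subset _ _
  -- the two degree conditions
  have h1 := hA.2 ⟨c, pv⟩
  have h2 := hA.2 ⟨c, pw⟩
  rw [neighborFinset_eq] at h1 h2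
  dsimp only at h1 h2
  rw [← hP] at h1
  rw [← hQ] at h2
  have e1 : ∀ (inst : DecidablePred (fun u : V S => u ∈ A ↔ (⟨c, pv⟩ : V S) ∈ A)),
      @Finset.filter _ _ inst (comp c \ P) = X \ P := by
    intro inst
    ext u; simp only [Finset.mem_filter, Finset.mem_sdiff, hX, iff_true_intro hv, iff_true]
    tauto
  have e2 : ∀ (inst : DecidablePred (fun u : V S => ¬(u ∈ A ↔ (⟨c, pv⟩ : V S) ∈ A))),
      @Finset.filter _ _ inst (comp c \ P) = Y \ P := by
    intro inst
    ext u; simp only [Finset.mem_filter, Finset.mem_sdiff, hY, iff_true_intro hv, iff_true]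
    tauto
  have e3 : ∀ (inst : DecidablePred (fun u : V S => u ∈ A ↔ (⟨c, pw⟩ : V S) ∈ A)),
      @Finset.filter _ _ inst (comp c \ Q) = Y \ Q := by
    intro inst
    ext u; simp only [Finset.mem_filter, Finset.mem_sdiff, hY, iff_false_intro hw, iff_false]
    tauto
  have e4 : ∀ (inst : DecidablePred (fun u : V S => ¬(u ∈ A ↔ (⟨c, pw⟩ : V S) ∈ A))),
      @Finset.filter _ _ inst (comp c \ Q) = X \ Q := by
    intro inst
    ext u; simp only [Finset.mem_filter, Finset.mem_sdiff, hX, iff_false_intro hw, iff_false,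
      not_not]
    tauto
  rw [e1 _, e2 _] at h1
  rw [e3 _, e4 _] at h2
  -- counting identities
  have cX_P : (X \ P).card + (X ∩ P).card = X.card := Finset.card_sdiff_add_card_inter _ _
  have cY_P : (Y \ P).card + (Y ∩ P).card = Y.card := Finset.card_sdiff_add_card_inter _ _
  have cX_Q : (X \ Q).card + (X ∩ Q).card = X.card := Finset.card_sdiff_add_card_inter _ _
  have cY_Q : (Y \ Q).card + (Y ∩ Q).card = Y.card := Finset.card_sdiff_add_card_inter _ _
  have hXPf : X ∩ P = P.filter (· ∈ A) := by
    ext u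
    simp only [Finset.mem_inter, hX, Finset.mem_filter]
    exact ⟨fun h => ⟨h.2, h.1.2⟩, fun h => ⟨⟨hPC h.1, h.2⟩, h.1⟩⟩
  have hYPf : Y ∩ P = P.filter (· ∉ A) := by
    ext u
    simp only [Finset.mem_inter, hY, Finset.mem_filter]
    exact ⟨fun h => ⟨h.2, h.1.2⟩, fun h => ⟨⟨hPC h.1, h.2⟩, h.1⟩⟩
  have hXQf : X ∩ Q = Q.filter (· ∈ A) := by
    ext u
    simp only [Finset.mem_inter, hX, Finset.mem_filter]
    exact ⟨fun h => ⟨h.2, h.1.2⟩, fun h => ⟨⟨hQC h.1, h.2⟩, h.1⟩⟩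
  have hYQf : Y ∩ Q = Q.filter (· ∉ A) := by
    ext u
    simp only [Finset.mem_inter, hY, Finset.mem_filter]
    exact ⟨fun h => ⟨h.2, h.1.2⟩, fun h => ⟨⟨hQC h.1, h.2⟩, h.1⟩⟩
  have pP : (X ∩ P).card + (Y ∩ P).card = 2 := by
    rw [hXPf, hYPf, Finset.card_filter_add_card_filter_not, pair_card]
  have pQ : (X ∩ Q).card + (Y ∩ Q).card = 2 := by
    rw [hXQf, hYQf, Finset.card_filter_add_card_filter_not]
    exact pair_card _ _
  have hvXP : 1 ≤ (X ∩ P).card := by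
    apply Finset.card_pos.mpr
    exact ⟨⟨c, pv⟩, by rw [hXPf]; exact Finset.mem_filter.mpr ⟨mem_pair_self ⟨c, pv⟩, hv⟩⟩
  have hwYQ : 1 ≤ (Y ∩ Q).card := by
    apply Finset.card_pos.mpr
    exact ⟨⟨c, pw⟩, by rw [hYQf]; exact Finset.mem_filter.mpr ⟨mem_pair_self ⟨c, pw⟩, hw⟩⟩
  omega

lemma card_V : Fintype.card (V S) = ∑ x ∈ S, 2 * (2 * x) := by
  rw [Fintype.card_sigma]
  rw [← Finset.sum_coe_sort S (fun x => 2 * (2 * x))]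
  apply Finset.sum_congr rfl
  intro c _
  simp [mul_comm]

lemma card_of_fibers {T : Finset ℕ} (hTS : T ⊆ S) (B : Finset (V S))
    (key : ∀ x ∈ S, (B.filter (fun v => (v.1 : ℕ) = x)).card = if x ∈ T then 2 * (2 * x) else 0) :
    B.card = ∑ x ∈ T, 2 * (2 * x) := by
  rw [Finset.card_eq_sum_card_fiberwise (f := fun v : V S => (v.1 : ℕ)) (t := S)
    (fun v _ => v.1.property)]
  rw [Finset.sum_congr rfl key, Finset.sum_ite_mem, Finset.inter_eq_right.mpr hTS]

lemma sum_four (U : Finset ℕ) : ∑ x ∈ U, 2 * (2 * x) = 4 * ∑ x ∈ U, x := by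
  rw [Finset.mul_sum]
  exact Finset.sum_congr rfl (fun x _ => by ring)

end SCBaux

open SCBaux

/-- a set of positive integers has an equal-sum partition iff the
associated graph has a strong community bisection. -/
theorem equal_sum_partition_iff_scb (S : Finset ℕ) (hpos : ∀ x ∈ S, 0 < x) :
    (∃ T ⊆ S, ∑ x ∈ T, x = ∑ x ∈ S \ T, x) ↔
    ∃ A : Finset (Σ x : {x // x ∈ S}, Fin 2 × Fin (2 * x.val)),
      IsStrongCommunityBisection (sppGraph S) A := by
  constructor
  · rintro ⟨T, hTS, hsum⟩
    refine ⟨Finset.univ.filter (fun v : V S => (v.1 : ℕ) ∈ T), ?_, ?_⟩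
    · -- cardinality condition
      have key : ∀ x ∈ S,
          (((Finset.univ.filter (fun v : V S => (v.1 : ℕ) ∈ T))).filter
            (fun v => (v.1 : ℕ) = x)).card = if x ∈ T then 2 * (2 * x) else 0 := by
        intro x hx
        by_cases hxT : x ∈ T
        · rw [if_pos hxT]
          have : ((Finset.univ.filter (fun v : V S => (v.1 : ℕ) ∈ T))).filter
              (fun v => (v.1 : ℕ) = x) = comp ⟨x, hx⟩ := by
            ext v
            simp only [Finset.mem_filter, Finset.mem_univ, true_and, mem_comp]
            constructor
            · rintro ⟨-, hv⟩; exact Subtype.ext hv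
            · intro h; rw [h]; exact ⟨hxT, rfl⟩
          rw [this, comp_card]
        · rw [if_neg hxT, Finset.card_eq_zero, Finset.filter_eq_empty_iff]
          rintro v hv rfl
          exact hxT (Finset.mem_filter.mp hv).2
      rw [card_of_fibers hTS _ key, card_V, sum_four, sum_four]
      have hsd : ∑ x ∈ S \ T, x + ∑ x ∈ T, x = ∑ x ∈ S, x := Finset.sum_sdiff hTS
      omega
    · -- vertex condition
      intro v
      have hall : ∀ u ∈ (sppGraph S).neighborFinset v,
          (u ∈ Finset.univ.filter (fun v : V S => (v.1 : ℕ) ∈ T) ↔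
           v ∈ Finset.univ.filter (fun v : V S => (v.1 : ℕ) ∈ T)) := by
        intro u hu
        rw [SimpleGraph.mem_neighborFinset] at hu
        have h1 : u.1 = v.1 := hu.1.symm
        simp [h1]
      have hne : ((sppGraph S).neighborFinset v).Nonempty := by
        have hc : 0 < (v.1 : ℕ) := hpos _ v.1.property
        refine ⟨⟨v.1, (v.2.1, ⟨if ((v.2.2 : ℕ)) = 0 then 1 else 0, by split <;> omega⟩)⟩, ?_⟩
        rw [SimpleGraph.mem_neighborFinset]
        refine ⟨rfl, ?_⟩
        dsimp
        split <;> omega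
      have main : ∀ (inst1 : DecidablePred fun u : V S =>
            (u ∈ Finset.univ.filter (fun w : V S => (w.1 : ℕ) ∈ T) ↔
             v ∈ Finset.univ.filter (fun w : V S => (w.1 : ℕ) ∈ T)))
          (inst2 : DecidablePred fun u : V S =>
            ¬(u ∈ Finset.univ.filter (fun w : V S => (w.1 : ℕ) ∈ T) ↔
              v ∈ Finset.univ.filter (fun w : V S => (w.1 : ℕ) ∈ T))),
          (@Finset.filter _ _ inst1 ((sppGraph S).neighborFinset v)).card >
          (@Finset.filter _ _ inst2 ((sppGraph S).neighborFinset v)).card := by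
        intro inst1 inst2
        have eq1 : @Finset.filter _ _ inst1 ((sppGraph S).neighborFinset v) =
            (sppGraph S).neighborFinset v := Finset.filter_true_of_mem hall
        have eq2 : @Finset.filter _ _ inst2 ((sppGraph S).neighborFinset v) = ∅ := by
          rw [Finset.filter_eq_empty_iff]
          intro u hu hn
          exact hn (hall u hu)
        rw [eq1, eq2, Finset.card_empty]
        exact Finset.card_pos.mpr hne
      exact main _ _
  · rintro ⟨A, hA⟩
    refine ⟨S.filter (fun x => ∀ v : V S, (v.1 : ℕ) = x → v ∈ A),
      Finset.filter_subset _ _, ?_⟩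
    set T := S.filter (fun x => ∀ v : V S, (v.1 : ℕ) = x → v ∈ A) with hT
    have hTS : T ⊆ S := Finset.filter_subset _ _
    have key : ∀ x ∈ S, ((A.filter (fun v => (v.1 : ℕ) = x)).card) =
        if x ∈ T then 2 * (2 * x) else 0 := by
      intro x hx
      by_cases hxT : x ∈ T
      · rw [if_pos hxT]
        have hmem := (Finset.mem_filter.mp hxT).2
        have : A.filter (fun v => (v.1 : ℕ) = x) = comp ⟨x, hx⟩ := by
          ext v
          simp only [Finset.mem_filter, mem_comp]
          constructor
          · rintro ⟨-, hv⟩; exact Subtype.ext hv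
          · intro h; exact ⟨hmem v (by rw [h]), by rw [h]⟩
        rw [this, comp_card]
      · rw [if_neg hxT, Finset.card_eq_zero, Finset.filter_eq_empty_iff]
        have hex : ∃ w : V S, (w.1 : ℕ) = x ∧ w ∉ A := by
          by_contra hcon
          push_neg at hcon
          exact hxT (Finset.mem_filter.mpr ⟨hx, fun v hv => hcon v hv⟩)
        obtain ⟨w, hwx, hwA⟩ := hex
        rintro v hv rfl
        exact hwA (comp_const hA (v := v) (w := w) (Subtype.ext hwx.symm) hv)
      -- note: comp_const needs v.1 = w.1
    have hcard := hA.1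
    rw [card_of_fibers hTS _ key, card_V, sum_four, sum_four] at hcard
    have hsd : ∑ x ∈ S \ T, x + ∑ x ∈ T, x = ∑ x ∈ S, x := Finset.sum_sdiff hTS
    omega
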